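/- arXiv:1908.05527 — 2 statements merged into one kernel-verified Lean document; each statement's English description precedes it below -/
import Mathlib

section
/- Let θ : [0,1] × [0,∞) → ℝ be differentiable in x and satisfy the Prüfer equation θ'(x;λ) = √λ (cos²θ(x;λ) + ω(x) sin²θ(x;λ)) for a.e. x ∈ [0,1], where ω ∈ L¹([0,1],ℝ), ω ≥ 0 a.e., and ∫₀¹ ω > 0. Then θ(1;λ) → +∞ as λ → +∞. -/
open MeasureTheory Real Set Filter intervalIntegral

/-- A function that is continuous at almost every point is a.e. strongly measurable. -/
lemma aestronglyMeasurable_of_ae_continuousAt {f : ℝ → ℝ} {μ : Measure ℝ}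
    (h : ∀ᵐ x ∂μ, ContinuousAt f x) : AEStronglyMeasurable f μ := by
  set D : Set ℝ := {x | ContinuousAt f x} with hDdef
  have hD : MeasurableSet D := measurableSet_of_continuousAt f
  have hcont : ContinuousOn f D := fun x hx => (hx : ContinuousAt f x).continuousWithinAt
  have h1 : AEStronglyMeasurable f (μ.restrict D) := hcont.aestronglyMeasurable hD
  have hmem : ∀ᵐ x ∂μ, x ∈ D := h
  rwa [Measure.restrict_eq_self_of_ae_mem hmem] at h1

lemma sqrt_tendsto_atTop' : Tendsto Real.sqrt atTop atTop := by
  rw [tendsto_atTop_atTop]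
  intro b
  refine ⟨max 0 (b ^ 2), fun a ha => ?_⟩
  have h2 : b ^ 2 ≤ a := le_trans (le_max_right _ _) ha
  calc b ≤ |b| := le_abs_self b
    _ = Real.sqrt (b ^ 2) := (Real.sqrt_sq_eq_abs b).symm
    _ ≤ Real.sqrt a := Real.sqrt_le_sqrt h2

/-- The integral of `min 1 ω` over `[0,1]` is positive. -/
lemma min_integral_pos {ω : ℝ → ℝ}
    (hωint : IntegrableOn ω (Icc (0:ℝ) 1))
    (hωnonneg : ∀ᵐ x ∂(volume.restrict (Icc (0:ℝ) 1)), 0 ≤ ω x)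
    (hωpos : 0 < ∫ x in (0:ℝ)..1, ω x) :
    0 < ∫ x in Icc (0:ℝ) 1, min 1 (ω x) := by
  have hmmeas : AEStronglyMeasurable (fun x => min 1 (ω x)) (volume.restrict (Icc (0:ℝ) 1)) :=
    (aemeasurable_const.min hωint.aemeasurable).aestronglyMeasurable
  have hmbound : ∀ᵐ x ∂(volume.restrict (Icc (0:ℝ) 1)), ‖min 1 (ω x)‖ ≤ ω x := by
    filter_upwards [hωnonneg] with x hx
    rw [Real.norm_eq_abs, abs_of_nonneg (le_min zero_le_one hx)]
    exact min_le_right _ _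
  have hmint : IntegrableOn (fun x => min 1 (ω x)) (Icc (0:ℝ) 1) := hωint.mono' hmmeas hmbound
  have hmnonneg : (0:ℝ → ℝ) ≤ᶠ[ae (volume.restrict (Icc (0:ℝ) 1))] fun x => min 1 (ω x) := by
    filter_upwards [hωnonneg] with x hx using le_min zero_le_one hx
  have hnn : 0 ≤ ∫ x in Icc (0:ℝ) 1, min 1 (ω x) :=
    MeasureTheory.integral_nonneg_of_ae hmnonneg
  rcases lt_or_eq_of_le hnn with h | h
  · exact h
  exfalso
  have h' : (∫ x in Icc (0:ℝ) 1, min 1 (ω x)) = 0 := h.symm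
  have hzero := (MeasureTheory.integral_eq_zero_iff_of_nonneg_ae hmnonneg hmint).mp h'
  have hωzero : ω =ᶠ[ae (volume.restrict (Icc (0:ℝ) 1))] 0 := by
    filter_upwards [hzero, hωnonneg] with x hx hx'
    by_contra hne
    have hpos : 0 < ω x := lt_of_le_of_ne hx' (Ne.symm hne)
    have h2 : 0 < min 1 (ω x) := lt_min one_pos hpos
    simp only [Pi.zero_apply] at hx
    rw [hx] at h2
    exact lt_irrefl 0 h2
  have hfin : (∫ x in (0:ℝ)..1, ω x) = 0 := by
    rw [intervalIntegral.integral_of_le (by norm_num : (0:ℝ) ≤ 1)]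
    have h2 : ω =ᶠ[ae (volume.restrict (Ioc (0:ℝ) 1))] (0:ℝ → ℝ) :=
      ae_restrict_of_ae_restrict_of_subset Ioc_subset_Icc_self hωzero
    rw [MeasureTheory.integral_congr_ae h2]
    simp
  linarith

/-- If θ(·;λ) is absolutely continuous on [0,1] with θ(0;λ) ∈ [0,π) and
satisfies the Prüfer equation θ'(x;λ) = √λ (cos²θ + ω sin²θ) a.e., where ω is
integrable, nonnegative a.e. and ∫₀¹ ω > 0, then θ(1;λ) → +∞ as λ → +∞. -/
theorem prufer_angle_tendsto_atTop
    (ω : ℝ → ℝ)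
    (hωint : IntegrableOn ω (Icc (0:ℝ) 1))
    (hωnonneg : ∀ᵐ x ∂(volume.restrict (Icc (0:ℝ) 1)), 0 ≤ ω x)
    (hωpos : 0 < ∫ x in (0:ℝ)..1, ω x)
    (θ : ℝ → ℝ → ℝ)
    (hθ0 : ∀ lam : ℝ, 0 ≤ lam → θ lam 0 ∈ Ico (0:ℝ) π)
    (hθae : ∀ lam : ℝ, 0 ≤ lam → ∀ᵐ x ∂(volume.restrict (Icc (0:ℝ) 1)),
        HasDerivAt (θ lam)
          (Real.sqrt lam * (Real.cos (θ lam x) ^ 2 + ω x * Real.sin (θ lam x) ^ 2)) x)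
    (hθFTC : ∀ lam : ℝ, 0 ≤ lam → ∀ x ∈ Icc (0:ℝ) 1,
        θ lam x = θ lam 0 + ∫ t in (0:ℝ)..x,
          Real.sqrt lam * (Real.cos (θ lam t) ^ 2 + ω t * Real.sin (θ lam t) ^ 2)) :
    Tendsto (fun lam => θ lam 1) atTop atTop := by
  have hcpos : 0 < ∫ x in Icc (0:ℝ) 1, min 1 (ω x) := min_integral_pos hωint hωnonneg hωpos
  -- main lower bound: for lam ≥ 0, θ lam 1 ≥ √lam * c
  have key : ∀ lam : ℝ, 0 ≤ lam →
      Real.sqrt lam * (∫ x in Icc (0:ℝ) 1, min 1 (ω x)) ≤ θ lam 1 := by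
    intro lam hlam
    -- θ lam is a.e. continuous on [0,1], hence a.e. strongly measurable
    have hθcont : ∀ᵐ x ∂(volume.restrict (Icc (0:ℝ) 1)), ContinuousAt (θ lam) x := by
      filter_upwards [hθae lam hlam] with x hx using hx.continuousAt
    have hθmeas : AEStronglyMeasurable (θ lam) (volume.restrict (Icc (0:ℝ) 1)) :=
      aestronglyMeasurable_of_ae_continuousAt hθcont
    have hθm : AEMeasurable (θ lam) (volume.restrict (Icc (0:ℝ) 1)) := hθmeas.aemeasurable
    have hgmeas : AEStronglyMeasurable
        (fun x => Real.sqrt lam * (Real.cos (θ lam x) ^ 2 + ω x * Real.sin (θ lam x) ^ 2))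
        (volume.restrict (Icc (0:ℝ) 1)) := by
      refine AEMeasurable.aestronglyMeasurable ?_
      exact (((Real.measurable_cos.comp_aemeasurable hθm).pow aemeasurable_const).add
        (hωint.aemeasurable.mul
          ((Real.measurable_sin.comp_aemeasurable hθm).pow aemeasurable_const))).const_mul _
    have hsq : (0:ℝ) ≤ Real.sqrt lam := Real.sqrt_nonneg lam
    have hgbound : ∀ᵐ x ∂(volume.restrict (Icc (0:ℝ) 1)),
        ‖Real.sqrt lam * (Real.cos (θ lam x) ^ 2 + ω x * Real.sin (θ lam x) ^ 2)‖
          ≤ Real.sqrt lam * (1 + ω x) := by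
      filter_upwards [hωnonneg] with x hx
      have h1 : Real.cos (θ lam x) ^ 2 ≤ 1 := Real.cos_sq_le_one _
      have h2 : Real.sin (θ lam x) ^ 2 ≤ 1 := Real.sin_sq_le_one _
      have h3 : (0:ℝ) ≤ Real.cos (θ lam x) ^ 2 := sq_nonneg _
      have h4 : (0:ℝ) ≤ Real.sin (θ lam x) ^ 2 := sq_nonneg _
      rw [Real.norm_eq_abs, abs_of_nonneg (by positivity)]
      have h5 : Real.cos (θ lam x) ^ 2 + ω x * Real.sin (θ lam x) ^ 2 ≤ 1 + ω x := by
        nlinarith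
      exact mul_le_mul_of_nonneg_left h5 hsq
    have hgint : IntegrableOn
        (fun x => Real.sqrt lam * (Real.cos (θ lam x) ^ 2 + ω x * Real.sin (θ lam x) ^ 2))
        (Icc (0:ℝ) 1) := by
      refine Integrable.mono' ?_ hgmeas hgbound
      exact ((MeasureTheory.integrable_const _).add hωint).const_mul _
    -- pointwise lower bound on Icc
    have hlow : ∀ᵐ x ∂(volume.restrict (Icc (0:ℝ) 1)),
        Real.sqrt lam * min 1 (ω x)
          ≤ Real.sqrt lam * (Real.cos (θ lam x) ^ 2 + ω x * Real.sin (θ lam x) ^ 2) := by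
      filter_upwards [hωnonneg] with x hx
      have h3 : (0:ℝ) ≤ Real.cos (θ lam x) ^ 2 := sq_nonneg _
      have h4 : (0:ℝ) ≤ Real.sin (θ lam x) ^ 2 := sq_nonneg _
      have hpyth : Real.sin (θ lam x) ^ 2 + Real.cos (θ lam x) ^ 2 = 1 :=
        Real.sin_sq_add_cos_sq _
      have hmin1 : min 1 (ω x) ≤ 1 := min_le_left _ _
      have hmin2 : min 1 (ω x) ≤ ω x := min_le_right _ _
      have h5 : min 1 (ω x) ≤ Real.cos (θ lam x) ^ 2 + ω x * Real.sin (θ lam x) ^ 2 := by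
        nlinarith
      exact mul_le_mul_of_nonneg_left h5 hsq
    -- transfer to Ioc and integrate
    have hlowIoc : ∀ᵐ x ∂(volume.restrict (Ioc (0:ℝ) 1)),
        Real.sqrt lam * min 1 (ω x)
          ≤ Real.sqrt lam * (Real.cos (θ lam x) ^ 2 + ω x * Real.sin (θ lam x) ^ 2) :=
      ae_restrict_of_ae_restrict_of_subset Ioc_subset_Icc_self hlow
    have hgintIoc : IntegrableOn
        (fun x => Real.sqrt lam * (Real.cos (θ lam x) ^ 2 + ω x * Real.sin (θ lam x) ^ 2))
        (Ioc (0:ℝ) 1) := hgint.mono_set Ioc_subset_Icc_self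
    have hmmeas : AEStronglyMeasurable (fun x => min 1 (ω x)) (volume.restrict (Icc (0:ℝ) 1)) :=
      (aemeasurable_const.min hωint.aemeasurable).aestronglyMeasurable
    have hmbound : ∀ᵐ x ∂(volume.restrict (Icc (0:ℝ) 1)), ‖min 1 (ω x)‖ ≤ ω x := by
      filter_upwards [hωnonneg] with x hx
      rw [Real.norm_eq_abs, abs_of_nonneg (le_min zero_le_one hx)]
      exact min_le_right _ _
    have hmint : IntegrableOn (fun x => min 1 (ω x)) (Icc (0:ℝ) 1) :=
      hωint.mono' hmmeas hmbound
    have hmintIoc : IntegrableOn (fun x => Real.sqrt lam * min 1 (ω x)) (Ioc (0:ℝ) 1) :=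
      (hmint.mono_set Ioc_subset_Icc_self).const_mul _
    have hineq : (∫ x in Ioc (0:ℝ) 1, Real.sqrt lam * min 1 (ω x))
        ≤ ∫ x in Ioc (0:ℝ) 1,
            Real.sqrt lam * (Real.cos (θ lam x) ^ 2 + ω x * Real.sin (θ lam x) ^ 2) :=
      MeasureTheory.integral_mono_ae hmintIoc hgintIoc hlowIoc
    have hconst : (∫ x in Ioc (0:ℝ) 1, Real.sqrt lam * min 1 (ω x))
        = Real.sqrt lam * ∫ x in Icc (0:ℝ) 1, min 1 (ω x) := by
      rw [MeasureTheory.integral_const_mul, MeasureTheory.integral_Icc_eq_integral_Ioc]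
    have hFTC := hθFTC lam hlam 1 (by norm_num)
    have hθ0nonneg : 0 ≤ θ lam 0 := (hθ0 lam hlam).1
    have hival : (∫ t in (0:ℝ)..1,
          Real.sqrt lam * (Real.cos (θ lam t) ^ 2 + ω t * Real.sin (θ lam t) ^ 2))
        = ∫ x in Ioc (0:ℝ) 1,
            Real.sqrt lam * (Real.cos (θ lam x) ^ 2 + ω x * Real.sin (θ lam x) ^ 2) :=
      intervalIntegral.integral_of_le (by norm_num)
    calc Real.sqrt lam * (∫ x in Icc (0:ℝ) 1, min 1 (ω x))
        = ∫ x in Ioc (0:ℝ) 1, Real.sqrt lam * min 1 (ω x) := hconst.symm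
      _ ≤ ∫ x in Ioc (0:ℝ) 1,
            Real.sqrt lam * (Real.cos (θ lam x) ^ 2 + ω x * Real.sin (θ lam x) ^ 2) := hineq
      _ ≤ θ lam 0 + ∫ x in Ioc (0:ℝ) 1,
            Real.sqrt lam * (Real.cos (θ lam x) ^ 2 + ω x * Real.sin (θ lam x) ^ 2) :=
          le_add_of_nonneg_left hθ0nonneg
      _ = θ lam 1 := by rw [hFTC, hival]
  -- conclude
  have htend : Tendsto (fun lam => Real.sqrt lam * ∫ x in Icc (0:ℝ) 1, min 1 (ω x))
      atTop atTop := sqrt_tendsto_atTop'.atTop_mul_const hcpos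
  refine tendsto_atTop_mono' atTop ?_ htend
  filter_upwards [eventually_ge_atTop (0:ℝ)] with lam hlam using key lam hlam
end

section
/- Uniform boundedness of the Prüfer radius exponent: Let H(x;λ) = (√λ/2) ∫₀ˣ (1 − ω(t)) sin(2θ(t;λ)) dt, where ω is monotone on [0,1] with inf ω > 0 and θ is the Prüfer angle satisfying θ' = √λ (cos²θ + ω sin²θ). Then there exist H₀ > 0 and Λ > 0 such that |H(x;λ)| ≤ H₀ for all x ∈ [0,1] and all λ ≥ Λ. -/
open MeasureTheory Real Set Filter intervalIntegral

private lemma log_lip {m p p' : ℝ} (hm : 0 < m) (hp : m ≤ p) (hp' : m ≤ p') :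
    |Real.log p' - Real.log p| ≤ |p' - p| / m := by
  wlog h : p ≤ p' generalizing p p'
  · have := this hp' hp (le_of_not_ge h)
    rw [abs_sub_comm, abs_sub_comm p p'] at this; exact this
  have hp0 : 0 < p := lt_of_lt_of_le hm hp
  have hp'0 : 0 < p' := lt_of_lt_of_le hm hp'
  rw [abs_of_nonneg (sub_nonneg.2 (Real.log_le_log hp0 h)),
      abs_of_nonneg (sub_nonneg.2 h)]
  have h1 : Real.log p' - Real.log p = Real.log (p' / p) := (Real.log_div (ne_of_gt hp'0) (ne_of_gt hp0)).symm
  rw [h1]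
  have h2 : Real.log (p' / p) ≤ p' / p - 1 := Real.log_le_sub_one_of_pos (div_pos hp'0 hp0)
  have h3 : p' / p - 1 = (p' - p) / p := by field_simp
  have h4 : (p' - p) / p ≤ (p' - p) / m := by
    apply div_le_div_of_nonneg_left (sub_nonneg.2 h) hm hp
  linarith

private lemma comp_ftc (φ u : ℝ → ℝ) (a b : ℝ) (hab : a ≤ b) (ha0 : 0 ≤ a) (hb1 : b ≤ 1)
    (hu_int : IntegrableOn u (Icc (0:ℝ) 1))
    (hu_pos : ∀ t ∈ Icc (0:ℝ) 1, 0 < u t)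
    (hder : ∀ᵐ t ∂(volume.restrict (Icc (0:ℝ) 1)), HasDerivAt φ (u t) t)
    (hdiff : ∀ p q : ℝ, 0 ≤ p → p ≤ q → q ≤ 1 → φ q - φ p = ∫ t in p..q, u t)
    (hmono : StrictMonoOn φ (Icc (0:ℝ) 1))
    (Φ Φ' : ℝ → ℝ) (hΦ : ∀ y, HasDerivAt Φ (Φ' y) y) (hΦ'c : Continuous Φ') :
    ∫ t in a..b, Φ' (φ t) * u t = Φ (φ b) - Φ (φ a) := by
  rcases eq_or_lt_of_le hab with rfl | hlt
  · simp
  have hIccsub : Ioo a b ⊆ Icc (0:ℝ) 1 := fun t ht => ⟨le_trans ha0 (le_of_lt ht.1), le_trans (le_of_lt ht.2) hb1⟩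
  have haI : a ∈ Icc (0:ℝ) 1 := ⟨ha0, le_trans hab hb1⟩
  have hbI : b ∈ Icc (0:ℝ) 1 := ⟨le_trans ha0 hab, hb1⟩
  set T : Set ℝ := {t | ¬ HasDerivAt φ (u t) t} with hT_def
  have hTnull : volume (T ∩ Icc (0:ℝ) 1) = 0 := by
    have := hder
    rw [ae_iff] at this
    rw [Measure.restrict_apply' measurableSet_Icc] at this
    exact this
  set N : Set ℝ := toMeasurable volume (T ∩ Icc (0:ℝ) 1) with hN_def
  have hNmeas : MeasurableSet N := measurableSet_toMeasurable _ _
  have hNnull : volume N = 0 := by rw [hN_def, measure_toMeasurable]; exact hTnull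
  set s : Set ℝ := Ioo a b \ N with hs_def
  have hsmeas : MeasurableSet s := measurableSet_Ioo.diff hNmeas
  have hs_sub : s ⊆ Ioo a b := diff_subset
  have hs_sub' : s ⊆ Icc (0:ℝ) 1 := fun t ht => hIccsub (hs_sub ht)
  have hs_der : ∀ t ∈ s, HasDerivAt φ (u t) t := by
    intro t ht
    by_contra hcon
    exact ht.2 (subset_toMeasurable _ _ ⟨hcon, hs_sub' ht⟩)
  have hs_pos : ∀ t ∈ s, 0 < u t := fun t ht => hu_pos t (hs_sub' ht)
  have hsae : (Ioo a b : Set ℝ) =ᵐ[volume] s := by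
    rw [MeasureTheory.ae_eq_set]
    constructor
    · exact measure_mono_null (fun t ht => by
        simp only [hs_def, mem_diff, not_and, not_not] at ht
        exact ht.2 ht.1) hNnull
    · simp [diff_eq_empty.2 hs_sub]
  have hinj : InjOn φ s := (hmono.injOn).mono hs_sub'
  have hcont_s : ContinuousOn φ s := fun t ht => ((hs_der t ht).continuousAt).continuousWithinAt
  have h1 : ∫ t in a..b, Φ' (φ t) * u t = ∫ t in s, Φ' (φ t) * u t := by
    rw [intervalIntegral.integral_of_le hab, ← setIntegral_congr_set Ioo_ae_eq_Ioc,
        setIntegral_congr_set hsae]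
  have h3 : ∫ t in s, Φ' (φ t) * u t = ∫ y in φ '' s, Φ' y := by
    rw [integral_image_eq_integral_abs_deriv_smul hsmeas
        (fun t ht => (hs_der t ht).hasDerivWithinAt) hinj Φ']
    apply setIntegral_congr_fun hsmeas
    intro t ht
    show Φ' (φ t) * u t = |u t| • Φ' (φ t)
    rw [smul_eq_mul, abs_of_pos (hs_pos t ht), mul_comm]
  have himmeas : MeasurableSet (φ '' s) := hsmeas.image_of_continuousOn_injOn hcont_s hinj
  have hab' : φ a < φ b := hmono haI hbI hlt
  have him_sub : φ '' s ⊆ Ioo (φ a) (φ b) := by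
    rintro y ⟨t, ht, rfl⟩
    exact ⟨hmono haI (hs_sub' ht) (hs_sub ht).1, hmono (hs_sub' ht) hbI (hs_sub ht).2⟩
  have hu_int_s : IntegrableOn u s := hu_int.mono_set hs_sub'
  have him_meas_eq : volume (φ '' s) = ENNReal.ofReal (φ b - φ a) := by
    rw [← MeasureTheory.lintegral_abs_det_fderiv_eq_addHaar_image volume hsmeas
        (fun t ht => ((hs_der t ht).hasDerivWithinAt).hasFDerivWithinAt) hinj]
    have : ∀ᵐ t ∂(volume.restrict s), ENNReal.ofReal
        |(ContinuousLinearMap.toSpanSingleton ℝ (u t)).det| = ENNReal.ofReal (u t) := by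
      filter_upwards [ae_restrict_mem hsmeas] with t ht
      rw [ContinuousLinearMap.det_toSpanSingleton, abs_of_pos (hs_pos t ht)]
    rw [lintegral_congr_ae this,
        ← MeasureTheory.ofReal_integral_eq_lintegral_ofReal hu_int_s
          ((ae_restrict_iff' hsmeas).2 (Filter.Eventually.of_forall
            (fun t ht => le_of_lt (hs_pos t ht))))]
    congr 1
    have : ∫ t in s, u t = ∫ t in a..b, u t := by
      rw [intervalIntegral.integral_of_le hab, ← setIntegral_congr_set Ioo_ae_eq_Ioc,
          setIntegral_congr_set hsae]
    rw [this, ← hdiff a b ha0 hab hb1]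
  have himage_ae : (Ioo (φ a) (φ b) : Set ℝ) =ᵐ[volume] φ '' s := by
    rw [MeasureTheory.ae_eq_set]
    refine ⟨?_, by simp [diff_eq_empty.2 him_sub]⟩
    have hfin : volume (φ '' s) ≠ ⊤ := by
      rw [him_meas_eq]; exact ENNReal.ofReal_ne_top
    rw [measure_diff him_sub himmeas.nullMeasurableSet hfin, him_meas_eq, Real.volume_Ioo,
        tsub_self]
  have h4 : ∫ y in φ '' s, Φ' y = Φ (φ b) - Φ (φ a) := by
    rw [← setIntegral_congr_set himage_ae, setIntegral_congr_set Ioo_ae_eq_Ioc,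
        ← intervalIntegral.integral_of_le (le_of_lt hab')]
    exact intervalIntegral.integral_eq_sub_of_hasDerivAt (fun y _ => hΦ y)
      (hΦ'c.intervalIntegrable _ _)
  rw [h1, h3, h4]

private lemma pointwise_id (sl w ov y : ℝ)
    (hq : Real.cos y ^ 2 + w * Real.sin y ^ 2 ≠ 0) :
    sl * ((1 - ov) * Real.sin (2 * y))
      = (sl * (w - ov)) * (Real.sin (2 * y) / (Real.cos y ^ 2 + w * Real.sin y ^ 2))
        - (((w - 1) * Real.sin (2 * y)) / (Real.cos y ^ 2 + w * Real.sin y ^ 2)) *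
          (sl * (Real.cos y ^ 2 + ov * Real.sin y ^ 2)) := by
  have hpyth : Real.cos y ^ 2 = 1 - Real.sin y ^ 2 := by
    have := Real.sin_sq_add_cos_sq y; linarith
  rw [hpyth] at hq ⊢
  field_simp
  ring

set_option maxHeartbeats 2000000 in
/-- Uniform boundedness of the Prüfer radius exponent
H(x;λ) = (√λ/2) ∫₀ˣ (1 − ω(t)) sin(2θ(t;λ)) dt, where ω is monotone on [0,1]
with positive infimum and θ is the Prüfer angle: there are H₀ > 0 and Λ > 0
with |H(x;λ)| ≤ H₀ for all x ∈ [0,1] and λ ≥ Λ. -/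
theorem prufer_exponent_uniformly_bounded
    (ω : ℝ → ℝ)
    (hωmono : MonotoneOn ω (Icc (0:ℝ) 1) ∨ AntitoneOn ω (Icc (0:ℝ) 1))
    (hωinf : 0 < sInf (ω '' Icc (0:ℝ) 1))
    (hωint : IntegrableOn ω (Icc (0:ℝ) 1))
    (θ : ℝ → ℝ → ℝ)
    (hθ0 : ∀ lam : ℝ, 0 ≤ lam → θ lam 0 ∈ Ico (0:ℝ) π)
    (hθae : ∀ lam : ℝ, 0 ≤ lam → ∀ᵐ x ∂(volume.restrict (Icc (0:ℝ) 1)),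
        HasDerivAt (θ lam)
          (Real.sqrt lam * (Real.cos (θ lam x) ^ 2 + ω x * Real.sin (θ lam x) ^ 2)) x)
    (hθFTC : ∀ lam : ℝ, 0 ≤ lam → ∀ x ∈ Icc (0:ℝ) 1,
        θ lam x = θ lam 0 + ∫ t in (0:ℝ)..x,
          Real.sqrt lam * (Real.cos (θ lam t) ^ 2 + ω t * Real.sin (θ lam t) ^ 2))
    (H : ℝ → ℝ → ℝ)
    (hH : ∀ lam : ℝ, ∀ x : ℝ,
        H lam x = Real.sqrt lam / 2 * ∫ t in (0:ℝ)..x, (1 - ω t) * Real.sin (2 * θ lam t)) :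
    ∃ H₀ > (0:ℝ), ∃ Λ > (0:ℝ), ∀ lam : ℝ, Λ ≤ lam → ∀ x ∈ Icc (0:ℝ) 1,
      |H lam x| ≤ H₀ := by
  have h0I : (0:ℝ) ∈ Icc (0:ℝ) 1 := ⟨le_refl 0, zero_le_one⟩
  have h1I : (1:ℝ) ∈ Icc (0:ℝ) 1 := ⟨zero_le_one, le_refl 1⟩
  set c := sInf (ω '' Icc (0:ℝ) 1) with hc_def
  set Mw := max (ω 0) (ω 1) with hMw_def
  have hub : ∀ t ∈ Icc (0:ℝ) 1, ω t ≤ Mw := by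
    intro t ht
    rcases hωmono with hm | hm
    · exact le_trans (hm ht h1I ht.2) (le_max_right _ _)
    · exact le_trans (hm h0I ht ht.1) (le_max_left _ _)
  have hlbmin : ∀ t ∈ Icc (0:ℝ) 1, min (ω 0) (ω 1) ≤ ω t := by
    intro t ht
    rcases hωmono with hm | hm
    · exact le_trans (min_le_left _ _) (hm h0I ht ht.1)
    · exact le_trans (min_le_right _ _) (hm ht h1I ht.2)
  have hbdd : BddBelow (ω '' Icc (0:ℝ) 1) := by
    refine ⟨min (ω 0) (ω 1), ?_⟩
    rintro y ⟨t, ht, rfl⟩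
    exact hlbmin t ht
  have hωlb : ∀ t ∈ Icc (0:ℝ) 1, c ≤ ω t := fun t ht => csInf_le hbdd ⟨t, ht, rfl⟩
  have hc : 0 < c := hωinf
  have hcMw : c ≤ Mw := le_trans (hωlb 0 h0I) (hub 0 h0I)
  set m := min 1 c with hm_def
  set MM := max 1 Mw with hMM_def
  have hm0 : 0 < m := lt_min one_pos hc
  have hm1 : m ≤ 1 := min_le_left _ _
  have hMM1 : 1 ≤ MM := le_max_left _ _
  have hmc : m ≤ c := min_le_right _ _
  have hMwMM : Mw ≤ MM := le_max_right _ _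
  have hq : ∀ w y : ℝ, c ≤ w → w ≤ Mw →
      m ≤ Real.cos y ^ 2 + w * Real.sin y ^ 2 ∧ Real.cos y ^ 2 + w * Real.sin y ^ 2 ≤ MM := by
    intro w y hcw hwM
    have hpy := Real.sin_sq_add_cos_sq y
    constructor
    · nlinarith [sq_nonneg (Real.sin y), sq_nonneg (Real.cos y)]
    · nlinarith [sq_nonneg (Real.sin y), sq_nonneg (Real.cos y)]
  set L1 := Real.log MM - Real.log m with hL1_def
  have hL1 : 0 ≤ L1 := by
    have h1 : Real.log m ≤ 0 := Real.log_nonpos (le_of_lt hm0) hm1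
    have h2 : 0 ≤ Real.log MM := Real.log_nonneg hMM1
    simp only [hL1_def]; linarith
  set C0 := 2 * L1 + (Mw - c) / m with hC0_def
  have hMwc : 0 ≤ Mw - c := sub_nonneg.2 hcMw
  have hC0 : 0 ≤ C0 := by
    have : 0 ≤ (Mw - c) / m := div_nonneg hMwc (le_of_lt hm0)
    simp only [hC0_def]; linarith
  have hH0pos : (0:ℝ) < C0 / 2 + 1 := lt_of_lt_of_le one_pos (le_add_of_nonneg_left (div_nonneg hC0 (by norm_num)))
  refine ⟨C0 / 2 + 1, hH0pos, 1, one_pos, ?_⟩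
  intro lam hlam x hx
  have hx0 : (0:ℝ) ≤ x := hx.1
  have hx1 : x ≤ 1 := hx.2
  have hlam0 : (0:ℝ) ≤ lam := le_trans zero_le_one hlam
  have hsq1 : 1 ≤ Real.sqrt lam := by
    rw [show (1:ℝ) = Real.sqrt 1 from (Real.sqrt_one).symm]
    exact Real.sqrt_le_sqrt hlam
  have hsq0 : 0 < Real.sqrt lam := lt_of_lt_of_le one_pos hsq1
  set φ : ℝ → ℝ := θ lam with hφ_def
  set u : ℝ → ℝ := fun t => Real.sqrt lam * (Real.cos (φ t) ^ 2 + ω t * Real.sin (φ t) ^ 2)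
    with hu_def
  have hu_lb : ∀ t ∈ Icc (0:ℝ) 1, Real.sqrt lam * m ≤ u t := fun t ht =>
    mul_le_mul_of_nonneg_left ((hq (ω t) (φ t) (hωlb t ht) (hub t ht)).1) (le_of_lt hsq0)
  have hu_ub : ∀ t ∈ Icc (0:ℝ) 1, u t ≤ Real.sqrt lam * MM := fun t ht =>
    mul_le_mul_of_nonneg_left ((hq (ω t) (φ t) (hωlb t ht) (hub t ht)).2) (le_of_lt hsq0)
  have hu_pos : ∀ t ∈ Icc (0:ℝ) 1, 0 < u t := fun t ht =>
    lt_of_lt_of_le (mul_pos hsq0 hm0) (hu_lb t ht)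
  have hder : ∀ᵐ t ∂(volume.restrict (Icc (0:ℝ) 1)), HasDerivAt φ (u t) t := hθae lam hlam0
  -- measurability of φ on [0,1]
  have hTnull : volume ({t | ¬ HasDerivAt φ (u t) t} ∩ Icc (0:ℝ) 1) = 0 := by
    have := hder
    rw [ae_iff] at this
    rw [Measure.restrict_apply' measurableSet_Icc] at this
    exact this
  set N := toMeasurable volume ({t | ¬ HasDerivAt φ (u t) t} ∩ Icc (0:ℝ) 1) with hN_def
  have hNmeas : MeasurableSet N := measurableSet_toMeasurable _ _
  have hNnull : volume N = 0 := by rw [hN_def, measure_toMeasurable]; exact hTnull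
  set s₀ : Set ℝ := Icc (0:ℝ) 1 \ N with hs₀_def
  have hs₀meas : MeasurableSet s₀ := measurableSet_Icc.diff hNmeas
  have hs₀der : ∀ t ∈ s₀, HasDerivAt φ (u t) t := by
    intro t ht
    by_contra hcon
    exact ht.2 (subset_toMeasurable _ _ ⟨hcon, ht.1⟩)
  have hφcont₀ : ContinuousOn φ s₀ := fun t ht =>
    ((hs₀der t ht).continuousAt).continuousWithinAt
  have hφae : AEMeasurable φ (volume.restrict (Icc (0:ℝ) 1)) := by
    obtain ⟨g, hgmeas, hg⟩ := hφcont₀.aemeasurable hs₀meas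
    refine ⟨g, hgmeas, ?_⟩
    rw [Filter.EventuallyEq, ae_iff, Measure.restrict_apply' measurableSet_Icc]
    have h1 : volume ({a | ¬ φ a = g a} ∩ s₀) = 0 := by
      have := hg
      rw [Filter.EventuallyEq, ae_iff, Measure.restrict_apply' hs₀meas] at this
      exact this
    refine measure_mono_null ?_ (measure_union_null h1 hNnull)
    rintro t ⟨ht1, ht2⟩
    by_cases h : t ∈ N
    · exact Or.inr h
    · exact Or.inl ⟨ht1, ht2, h⟩
  have hωae : AEMeasurable ω (volume.restrict (Icc (0:ℝ) 1)) := hωint.aemeasurable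
  have hsinφ : AEMeasurable (fun t => Real.sin (2 * φ t)) (volume.restrict (Icc (0:ℝ) 1)) :=
    ((Real.continuous_sin.comp (continuous_const.mul continuous_id)).measurable).comp_aemeasurable hφae
  have hcos2 : AEMeasurable (fun t => Real.cos (φ t) ^ 2) (volume.restrict (Icc (0:ℝ) 1)) :=
    (((Real.continuous_cos.pow 2) : Continuous fun y : ℝ => Real.cos y ^ 2).measurable).comp_aemeasurable hφae
  have hsin2 : AEMeasurable (fun t => Real.sin (φ t) ^ 2) (volume.restrict (Icc (0:ℝ) 1)) :=
    (((Real.continuous_sin.pow 2) : Continuous fun y : ℝ => Real.sin y ^ 2).measurable).comp_aemeasurable hφae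
  have hu_aesm : AEStronglyMeasurable u (volume.restrict (Icc (0:ℝ) 1)) :=
    (aemeasurable_const.mul (hcos2.add (hωae.mul hsin2))).aestronglyMeasurable
  have hu_int : IntegrableOn u (Icc (0:ℝ) 1) := by
    refine Integrable.mono' (integrable_const (Real.sqrt lam * MM)) hu_aesm ?_
    filter_upwards [ae_restrict_mem measurableSet_Icc] with t ht
    rw [Real.norm_eq_abs, abs_of_pos (hu_pos t ht)]
    exact hu_ub t ht
  have hii : ∀ h : ℝ → ℝ, IntegrableOn h (Icc (0:ℝ) 1) → ∀ p q : ℝ, 0 ≤ p → p ≤ q → q ≤ 1 →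
      IntervalIntegrable h volume p q := by
    intro h hint p q hp hpq hq1
    apply IntegrableOn.intervalIntegrable
    apply hint.mono_set
    rw [uIcc_of_le hpq]
    exact Icc_subset_Icc hp hq1
  have hdiff : ∀ p q : ℝ, 0 ≤ p → p ≤ q → q ≤ 1 → φ q - φ p = ∫ t in p..q, u t := by
    intro p q hp hpq hq1
    have e1 := hθFTC lam hlam0 q ⟨le_trans hp hpq, hq1⟩
    have e2 := hθFTC lam hlam0 p ⟨hp, le_trans hpq hq1⟩
    have e3 : φ q - φ p = (∫ t in (0:ℝ)..q, u t) - ∫ t in (0:ℝ)..p, u t := by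
      rw [hφ_def, e1, e2]; ring
    rw [e3, intervalIntegral.integral_interval_sub_left
      (hii u hu_int 0 q (le_refl 0) (le_trans hp hpq) hq1)
      (hii u hu_int 0 p (le_refl 0) hp (le_trans hpq hq1))]
  have hgrow_lb : ∀ p q : ℝ, 0 ≤ p → p ≤ q → q ≤ 1 →
      Real.sqrt lam * m * (q - p) ≤ φ q - φ p := by
    intro p q hp hpq hq1
    rw [hdiff p q hp hpq hq1]
    have e1 : Real.sqrt lam * m * (q - p) = ∫ _t in p..q, (Real.sqrt lam * m) := by
      rw [intervalIntegral.integral_const, smul_eq_mul]; ring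
    rw [e1]
    refine intervalIntegral.integral_mono_on hpq intervalIntegrable_const
      (hii u hu_int p q hp hpq hq1) ?_
    intro t ht
    exact hu_lb t ⟨le_trans hp ht.1, le_trans ht.2 hq1⟩
  have hmono : StrictMonoOn φ (Icc (0:ℝ) 1) := by
    intro a ha b hb hab
    have h1 := hgrow_lb a b ha.1 (le_of_lt hab) hb.2
    nlinarith [mul_pos (mul_pos hsq0 hm0) (sub_pos.2 hab)]
  -- derivative of the comparison function
  have hΦder : ∀ w y : ℝ, c ≤ w → w ≤ Mw →
      HasDerivAt (fun z => Real.log (Real.cos z ^ 2 + w * Real.sin z ^ 2))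
        (((w - 1) * Real.sin (2 * y)) / (Real.cos y ^ 2 + w * Real.sin y ^ 2)) y := by
    intro w y hcw hwM
    have hq0 : 0 < Real.cos y ^ 2 + w * Real.sin y ^ 2 := lt_of_lt_of_le hm0 (hq w y hcw hwM).1
    have h1 : HasDerivAt (fun z => Real.cos z ^ 2 + w * Real.sin z ^ 2)
        ((w - 1) * Real.sin (2 * y)) y := by
      have hc1 := (Real.hasDerivAt_cos y).pow 2
      have hs1 := (Real.hasDerivAt_sin y).pow 2
      have h2 := hc1.add (hs1.const_mul w)
      refine h2.congr_deriv ?_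
      push_cast
      rw [Real.sin_two_mul]
      ring
    exact h1.log (ne_of_gt hq0)
  have hΦ'cont : ∀ w : ℝ, c ≤ w → w ≤ Mw →
      Continuous (fun y => ((w - 1) * Real.sin (2 * y)) /
        (Real.cos y ^ 2 + w * Real.sin y ^ 2)) := by
    intro w hcw hwM
    refine Continuous.div
      (continuous_const.mul (Real.continuous_sin.comp (continuous_const.mul continuous_id)))
      ((Real.continuous_cos.pow 2).add (continuous_const.mul (Real.continuous_sin.pow 2))) ?_
    intro y
    exact ne_of_gt (lt_of_lt_of_le hm0 (hq w y hcw hwM).1)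
  -- integrability facts
  have hfint : IntegrableOn (fun t => (1 - ω t) * Real.sin (2 * φ t)) (Icc (0:ℝ) 1) := by
    have h1 : IntegrableOn (fun t => (1:ℝ) - ω t) (Icc (0:ℝ) 1) :=
      (integrable_const (1:ℝ)).sub hωint
    have h2 := h1.bdd_mul hsinφ.aestronglyMeasurable
      (Filter.Eventually.of_forall fun t => by rw [Real.norm_eq_abs]; exact Real.abs_sin_le_one _)
    exact h2.congr (Filter.Eventually.of_forall fun t => mul_comm _ _)
  have hker_bd : ∀ w' : ℝ, c ≤ w' → w' ≤ Mw → ∀ t : ℝ,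
      ‖Real.sin (2 * φ t) / (Real.cos (φ t) ^ 2 + w' * Real.sin (φ t) ^ 2)‖ ≤ 1 / m := by
    intro w' hcw hwM t
    have hqy := (hq w' (φ t) hcw hwM).1
    rw [Real.norm_eq_abs, abs_div]
    rw [abs_of_pos (lt_of_lt_of_le hm0 hqy)]
    exact div_le_div₀ zero_le_one (Real.abs_sin_le_one _) hm0 hqy
  have hgint : ∀ w' : ℝ, c ≤ w' → w' ≤ Mw →
      IntegrableOn (fun t => (Real.sqrt lam * (w' - ω t)) *
        (Real.sin (2 * φ t) / (Real.cos (φ t) ^ 2 + w' * Real.sin (φ t) ^ 2)))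
        (Icc (0:ℝ) 1) := by
    intro w' hcw hwM
    have h1 : IntegrableOn (fun t => Real.sqrt lam * (w' - ω t)) (Icc (0:ℝ) 1) :=
      ((integrable_const w').sub hωint).const_mul (Real.sqrt lam)
    have hker : AEMeasurable (fun t => Real.sin (2 * φ t) /
        (Real.cos (φ t) ^ 2 + w' * Real.sin (φ t) ^ 2)) (volume.restrict (Icc (0:ℝ) 1)) :=
      hsinφ.div (hcos2.add (aemeasurable_const.mul hsin2))
    have h2 := h1.bdd_mul hker.aestronglyMeasurable (Filter.Eventually.of_forall (hker_bd w' hcw hwM))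
    exact h2.congr (Filter.Eventually.of_forall fun t => mul_comm _ _)
  have hΦu_int : ∀ w' : ℝ, c ≤ w' → w' ≤ Mw →
      IntegrableOn (fun t => (((w' - 1) * Real.sin (2 * φ t)) /
        (Real.cos (φ t) ^ 2 + w' * Real.sin (φ t) ^ 2)) * u t) (Icc (0:ℝ) 1) := by
    intro w' hcw hwM
    refine hu_int.bdd_mul (c := |w' - 1| / m) ?_ (Filter.Eventually.of_forall ?_)
    · exact ((aemeasurable_const.mul hsinφ).div
        (hcos2.add (aemeasurable_const.mul hsin2))).aestronglyMeasurable
    · intro t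
      have hqy := (hq w' (φ t) hcw hwM).1
      rw [Real.norm_eq_abs, abs_div, abs_mul, abs_of_pos (lt_of_lt_of_le hm0 hqy)]
      refine div_le_div₀ (abs_nonneg _) ?_ hm0 hqy
      have h5 := Real.abs_sin_le_one (2 * φ t)
      nlinarith [abs_nonneg (w' - 1), abs_nonneg (Real.sin (2 * φ t))]
  -- the key estimate
  have hlog_abs : ∀ p : ℝ, m ≤ p → p ≤ MM → |Real.log p| ≤ L1 := by
    intro p h1 h2
    rw [abs_le]
    have h3 : Real.log m ≤ Real.log p := Real.log_le_log hm0 h1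
    have h4 : Real.log p ≤ Real.log MM := Real.log_le_log (lt_of_lt_of_le hm0 h1) h2
    have h5 : (0:ℝ) ≤ Real.log MM := Real.log_nonneg hMM1
    have h6 : Real.log m ≤ 0 := Real.log_nonpos (le_of_lt hm0) hm1
    constructor
    · simp only [hL1_def]; linarith
    · simp only [hL1_def]; linarith
  have key : ∀ n : ℕ, 0 < n →
      |Real.sqrt lam * ∫ t in (0:ℝ)..x, (1 - ω t) * Real.sin (2 * φ t)|
        ≤ C0 + (Real.sqrt lam * (Mw - c) / m) / n := by
    intro n hn
    have hn0 : (0:ℝ) < (n:ℝ) := Nat.cast_pos.2 hn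
    set tt : ℕ → ℝ := fun i => x * i / n with htt_def
    have htt_mono : ∀ i j : ℕ, i ≤ j → tt i ≤ tt j := by
      intro i j hij
      simp only [htt_def]
      have h1 : (i:ℝ) ≤ (j:ℝ) := Nat.cast_le.2 hij
      have h2 : x * i ≤ x * j := mul_le_mul_of_nonneg_left h1 hx0
      exact (div_le_div_iff_of_pos_right hn0).mpr h2
    have htt_le : ∀ i : ℕ, tt i ≤ tt (i+1) := fun i => htt_mono i (i+1) (Nat.le_succ i)
    have htt0 : tt 0 = 0 := by simp [htt_def]
    have httn : tt n = x := by
      simp only [htt_def]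
      rw [mul_div_assoc, div_self (ne_of_gt hn0), mul_one]
    have htt_mem : ∀ i : ℕ, i ≤ n → tt i ∈ Icc (0:ℝ) 1 := by
      intro i hi
      constructor
      · simp only [htt_def]; positivity
      · have h1 : tt i ≤ tt n := htt_mono i n hi
        rw [httn] at h1; linarith
    have hstep : ∀ i : ℕ, tt (i+1) - tt i = x / n := by
      intro i
      simp only [htt_def]
      push_cast
      field_simp
      ring
    set w : ℕ → ℝ := fun i => ω (tt i) with hw_def
    have hwlb : ∀ i, i ≤ n → c ≤ w i := fun i hi => hωlb _ (htt_mem i hi)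
    have hwub : ∀ i, i ≤ n → w i ≤ Mw := fun i hi => hub _ (htt_mem i hi)
    set A : ℕ → ℝ := fun i =>
      Real.log (Real.cos (φ (tt i)) ^ 2 + w i * Real.sin (φ (tt i)) ^ 2) with hA_def
    set B : ℕ → ℝ := fun i =>
      Real.log (Real.cos (φ (tt (i+1))) ^ 2 + w i * Real.sin (φ (tt (i+1))) ^ 2) with hB_def
    set E : ℕ → ℝ := fun i => ∫ t in tt i..tt (i+1),
      (Real.sqrt lam * (w i - ω t)) *
        (Real.sin (2 * φ t) / (Real.cos (φ t) ^ 2 + w i * Real.sin (φ t) ^ 2)) with hE_def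
    set d : ℕ → ℝ := fun i => |ω (tt (i+1)) - ω (tt i)| with hd_def
    have hd_nonneg : ∀ i, 0 ≤ d i := fun i => abs_nonneg _
    -- per-piece identity
    have hpiece : ∀ i : ℕ, i < n →
        Real.sqrt lam * (∫ t in tt i..tt (i+1), (1 - ω t) * Real.sin (2 * φ t))
          = (A i - B i) + E i := by
      intro i hi
      have hi' : i ≤ n := le_of_lt hi
      have hi1 : i + 1 ≤ n := hi
      have h0i : 0 ≤ tt i := (htt_mem i hi').1
      have h1i : tt (i+1) ≤ 1 := (htt_mem (i+1) hi1).2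
      have hple : tt i ≤ tt (i+1) := htt_le i
      have hwc := hwlb i hi'
      have hwM := hwub i hi'
      have hftc := comp_ftc φ u (tt i) (tt (i+1)) hple h0i h1i hu_int hu_pos hder hdiff hmono
        (fun z => Real.log (Real.cos z ^ 2 + w i * Real.sin z ^ 2))
        (fun y => ((w i - 1) * Real.sin (2 * y)) / (Real.cos y ^ 2 + w i * Real.sin y ^ 2))
        (fun y => hΦder (w i) y hwc hwM) (hΦ'cont (w i) hwc hwM)
      have hidfun : EqOn (fun t => Real.sqrt lam * ((1 - ω t) * Real.sin (2 * φ t)))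
          (fun t => (Real.sqrt lam * (w i - ω t)) *
              (Real.sin (2 * φ t) / (Real.cos (φ t) ^ 2 + w i * Real.sin (φ t) ^ 2))
            - (((w i - 1) * Real.sin (2 * φ t)) /
              (Real.cos (φ t) ^ 2 + w i * Real.sin (φ t) ^ 2)) * u t)
          (uIcc (tt i) (tt (i+1))) := by
        intro t ht
        rw [uIcc_of_le hple] at ht
        have htI : t ∈ Icc (0:ℝ) 1 := ⟨le_trans h0i ht.1, le_trans ht.2 h1i⟩
        have hqw : 0 < Real.cos (φ t) ^ 2 + w i * Real.sin (φ t) ^ 2 :=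
          lt_of_lt_of_le hm0 (hq (w i) (φ t) hwc hwM).1
        exact pointwise_id (Real.sqrt lam) (w i) (ω t) (φ t) (ne_of_gt hqw)
      have hint1 : IntervalIntegrable (fun t => (((w i - 1) * Real.sin (2 * φ t)) /
          (Real.cos (φ t) ^ 2 + w i * Real.sin (φ t) ^ 2)) * u t) volume (tt i) (tt (i+1)) :=
        hii _ (hΦu_int (w i) hwc hwM) _ _ h0i hple h1i
      have hint2 : IntervalIntegrable (fun t => (Real.sqrt lam * (w i - ω t)) *
          (Real.sin (2 * φ t) / (Real.cos (φ t) ^ 2 + w i * Real.sin (φ t) ^ 2)))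
          volume (tt i) (tt (i+1)) :=
        hii _ (hgint (w i) hwc hwM) _ _ h0i hple h1i
      have hftc' : ∫ t in tt i..tt (i+1),
          (((w i - 1) * Real.sin (2 * φ t)) /
            (Real.cos (φ t) ^ 2 + w i * Real.sin (φ t) ^ 2)) * u t
          = Real.log (Real.cos (φ (tt (i+1))) ^ 2 + w i * Real.sin (φ (tt (i+1))) ^ 2)
            - Real.log (Real.cos (φ (tt i)) ^ 2 + w i * Real.sin (φ (tt i)) ^ 2) := hftc
      rw [← intervalIntegral.integral_const_mul, intervalIntegral.integral_congr hidfun,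
        intervalIntegral.integral_sub hint2 hint1, hftc']
      simp only [hA_def, hB_def, hE_def]
      ring
    -- error bounds
    have hωosc : ∀ i : ℕ, i < n → ∀ t ∈ Icc (tt i) (tt (i+1)), |w i - ω t| ≤ d i := by
      intro i hi t ht
      have htI : t ∈ Icc (0:ℝ) 1 :=
        ⟨le_trans (htt_mem i (le_of_lt hi)).1 ht.1, le_trans ht.2 (htt_mem (i+1) hi).2⟩
      have hiI := htt_mem i (le_of_lt hi)
      have hi1I := htt_mem (i+1) hi
      simp only [hw_def, hd_def]
      rcases hωmono with hmn | hmn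
      · have h1 : ω (tt i) ≤ ω t := hmn hiI htI ht.1
        have h2 : ω t ≤ ω (tt (i+1)) := hmn htI hi1I ht.2
        rw [abs_of_nonpos (by linarith), abs_of_nonneg (by linarith)]
        linarith
      · have h1 : ω t ≤ ω (tt i) := hmn hiI htI ht.1
        have h2 : ω (tt (i+1)) ≤ ω t := hmn htI hi1I ht.2
        rw [abs_of_nonneg (by linarith), abs_of_nonpos (by linarith)]
        linarith
    have hEbd : ∀ i : ℕ, i < n → |E i| ≤ (Real.sqrt lam / m) * d i * (x / n) := by
      intro i hi
      have hple : tt i ≤ tt (i+1) := htt_le i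
      have hb : ∀ t ∈ Set.uIoc (tt i) (tt (i+1)),
          ‖(Real.sqrt lam * (w i - ω t)) *
            (Real.sin (2 * φ t) / (Real.cos (φ t) ^ 2 + w i * Real.sin (φ t) ^ 2))‖
            ≤ Real.sqrt lam / m * d i := by
        intro t ht
        rw [Set.uIoc_of_le hple] at ht
        have ht' : t ∈ Icc (tt i) (tt (i+1)) := ⟨le_of_lt ht.1, ht.2⟩
        have h1 := hωosc i hi t ht'
        have h2 := hker_bd (w i) (hwlb i (le_of_lt hi)) (hwub i (le_of_lt hi)) t
        rw [Real.norm_eq_abs, abs_mul, abs_mul, abs_of_pos hsq0]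
        rw [Real.norm_eq_abs] at h2
        have h3 : Real.sqrt lam * |w i - ω t| ≤ Real.sqrt lam * d i :=
          mul_le_mul_of_nonneg_left h1 (le_of_lt hsq0)
        calc Real.sqrt lam * |w i - ω t| *
              |Real.sin (2 * φ t) / (Real.cos (φ t) ^ 2 + w i * Real.sin (φ t) ^ 2)|
            ≤ Real.sqrt lam * d i * (1 / m) := by
              apply mul_le_mul h3 h2 (abs_nonneg _)
              positivity
          _ = Real.sqrt lam / m * d i := by ring
      have h4 := intervalIntegral.norm_integral_le_of_norm_le_const hb
      rw [Real.norm_eq_abs] at h4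
      have h5 : |tt (i+1) - tt i| = x / n := by
        rw [hstep i, abs_of_nonneg (by positivity)]
      rw [h5] at h4
      simpa only [hE_def] using h4
    -- telescoping sum of oscillations
    have hd_sum : ∑ i ∈ Finset.range n, d i ≤ Mw - c := by
      have hωxMw : ω x ≤ Mw := hub x hx
      have hωxc : c ≤ ω x := hωlb x hx
      have hω0Mw : ω 0 ≤ Mw := hub 0 h0I
      have hω0c : c ≤ ω 0 := hωlb 0 h0I
      rcases hωmono with hmn | hmn
      · have heq : ∀ i ∈ Finset.range n, d i = ω (tt (i+1)) - ω (tt i) := by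
          intro i hi
          rw [Finset.mem_range] at hi
          simp only [hd_def]
          exact abs_of_nonneg (sub_nonneg.2
            (hmn (htt_mem i (le_of_lt hi)) (htt_mem (i+1) hi) (htt_le i)))
        rw [Finset.sum_congr rfl heq, Finset.sum_range_sub (fun i => ω (tt i)), htt0, httn]
        linarith
      · have heq : ∀ i ∈ Finset.range n, d i = ω (tt i) - ω (tt (i+1)) := by
          intro i hi
          rw [Finset.mem_range] at hi
          simp only [hd_def]
          rw [abs_of_nonpos (sub_nonpos.2
            (hmn (htt_mem i (le_of_lt hi)) (htt_mem (i+1) hi) (htt_le i)))]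
          ring
        rw [Finset.sum_congr rfl heq, Finset.sum_range_sub' (fun i => ω (tt i)), htt0, httn]
        linarith
    -- sum over pieces
    have hsum : Real.sqrt lam * (∫ t in (0:ℝ)..x, (1 - ω t) * Real.sin (2 * φ t))
        = (∑ i ∈ Finset.range n, (A i - B i)) + ∑ i ∈ Finset.range n, E i := by
      have hadj : ∀ k < n, IntervalIntegrable (fun t => (1 - ω t) * Real.sin (2 * φ t))
          volume (tt k) (tt (k+1)) := fun k hk =>
        hii _ hfint _ _ (htt_mem k (le_of_lt hk)).1 (htt_le k) (htt_mem (k+1) hk).2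
      have h1 := intervalIntegral.sum_integral_adjacent_intervals hadj
      rw [htt0, httn] at h1
      rw [← h1, Finset.mul_sum, ← Finset.sum_add_distrib]
      exact Finset.sum_congr rfl fun i hi => hpiece i (Finset.mem_range.1 hi)
    -- Abel bound
    have hq_mem : ∀ (w' : ℝ) (y : ℝ), c ≤ w' → w' ≤ Mw →
        m ≤ Real.cos y ^ 2 + w' * Real.sin y ^ 2 ∧
          Real.cos y ^ 2 + w' * Real.sin y ^ 2 ≤ MM := fun w' y h1 h2 => hq w' y h1 h2
    have hA_bd : ∀ i, i ≤ n → |A i| ≤ L1 := by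
      intro i hi
      simp only [hA_def]
      exact hlog_abs _ (hq_mem (w i) (φ (tt i)) (hwlb i hi) (hwub i hi)).1
        (hq_mem (w i) (φ (tt i)) (hwlb i hi) (hwub i hi)).2
    have hB_bd : ∀ i, i ≤ n → |B i| ≤ L1 := by
      intro i hi
      simp only [hB_def]
      exact hlog_abs _ (hq_mem (w i) (φ (tt (i+1))) (hwlb i hi) (hwub i hi)).1
        (hq_mem (w i) (φ (tt (i+1))) (hwlb i hi) (hwub i hi)).2
    have hAB : ∀ i : ℕ, i + 1 ≤ n → |A (i+1) - B i| ≤ d i / m := by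
      intro i hi
      have hi' : i ≤ n := le_trans (Nat.le_succ i) hi
      simp only [hA_def, hB_def]
      have h1 := (hq_mem (w (i+1)) (φ (tt (i+1))) (hwlb (i+1) hi) (hwub (i+1) hi)).1
      have h2 := (hq_mem (w i) (φ (tt (i+1))) (hwlb i hi') (hwub i hi')).1
      have h3 := log_lip hm0 h2 h1
      refine le_trans h3 ?_
      have h4 : |(Real.cos (φ (tt (i+1))) ^ 2 + w (i+1) * Real.sin (φ (tt (i+1))) ^ 2)
          - (Real.cos (φ (tt (i+1))) ^ 2 + w i * Real.sin (φ (tt (i+1))) ^ 2)| ≤ d i := by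
        have h5 : (Real.cos (φ (tt (i+1))) ^ 2 + w (i+1) * Real.sin (φ (tt (i+1))) ^ 2)
            - (Real.cos (φ (tt (i+1))) ^ 2 + w i * Real.sin (φ (tt (i+1))) ^ 2)
            = (w (i+1) - w i) * Real.sin (φ (tt (i+1))) ^ 2 := by ring
        rw [h5, abs_mul]
        have h6 : |Real.sin (φ (tt (i+1))) ^ 2| ≤ 1 := by
          rw [abs_of_nonneg (sq_nonneg _)]
          exact Real.sin_sq_le_one _
        have h7 : d i = |w (i+1) - w i| := by
          simp only [hd_def, hw_def]
        rw [h7]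
        exact mul_le_of_le_one_right (abs_nonneg _) h6
      exact (div_le_div_iff_of_pos_right hm0).mpr h4
    -- assemble
    obtain ⟨k, rfl⟩ : ∃ k, n = k + 1 := ⟨n - 1, (Nat.succ_pred_eq_of_pos hn).symm⟩
    have hsplit : ∑ i ∈ Finset.range (k+1), (A i - B i)
        = (A 0 - B k) + ∑ i ∈ Finset.range k, (A (i+1) - B i) := by
      rw [Finset.sum_sub_distrib, Finset.sum_range_succ' A k, Finset.sum_range_succ B k,
        Finset.sum_sub_distrib]
      ring
    have hABs : |∑ i ∈ Finset.range (k+1), (A i - B i)| ≤ 2 * L1 + (Mw - c) / m := by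
      rw [hsplit]
      have h1 : |∑ i ∈ Finset.range k, (A (i+1) - B i)| ≤ (Mw - c) / m := by
        refine le_trans (Finset.abs_sum_le_sum_abs _ _) ?_
        have h2 : ∀ i ∈ Finset.range k, |A (i+1) - B i| ≤ d i / m := by
          intro i hi
          rw [Finset.mem_range] at hi
          exact hAB i (by omega)
        refine le_trans (Finset.sum_le_sum h2) ?_
        rw [← Finset.sum_div]
        have h3 : ∑ i ∈ Finset.range k, d i ≤ ∑ i ∈ Finset.range (k+1), d i :=
          Finset.sum_le_sum_of_subset_of_nonneg (Finset.range_subset_range.2 (Nat.le_succ k))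
            (fun i _ _ => hd_nonneg i)
        exact (div_le_div_iff_of_pos_right hm0).mpr (le_trans h3 hd_sum)
      have hA0 := hA_bd 0 (Nat.zero_le _)
      have hBk := hB_bd k (Nat.le_succ k)
      calc |A 0 - B k + ∑ i ∈ Finset.range k, (A (i+1) - B i)|
          ≤ |A 0 - B k| + |∑ i ∈ Finset.range k, (A (i+1) - B i)| := abs_add_le _ _
        _ ≤ (|A 0| + |B k|) + (Mw - c) / m := add_le_add (abs_sub _ _) h1
        _ ≤ 2 * L1 + (Mw - c) / m := by linarith
    have hEs : |∑ i ∈ Finset.range (k+1), E i|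
        ≤ (Real.sqrt lam * (Mw - c) / m) / ((k+1:ℕ):ℝ) := by
      refine le_trans (Finset.abs_sum_le_sum_abs _ _) ?_
      have h2 : ∀ i ∈ Finset.range (k+1), |E i| ≤ (Real.sqrt lam / m) * (x / ((k+1:ℕ):ℝ)) * d i := by
        intro i hi
        refine le_trans (hEbd i (Finset.mem_range.1 hi)) ?_
        apply le_of_eq
        ring
      refine le_trans (Finset.sum_le_sum h2) ?_
      rw [← Finset.mul_sum]
      have hN : (0:ℝ) < ((k+1:ℕ):ℝ) := hn0
      have hsum_d0 : 0 ≤ ∑ i ∈ Finset.range (k+1), d i :=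
        Finset.sum_nonneg fun i _ => hd_nonneg i
      have h4 : Real.sqrt lam / m * (x / ((k+1:ℕ):ℝ)) * (∑ i ∈ Finset.range (k+1), d i)
          ≤ Real.sqrt lam / m * (1 / ((k+1:ℕ):ℝ)) * (Mw - c) := by
        apply mul_le_mul ?_ hd_sum hsum_d0 (by positivity)
        apply mul_le_mul_of_nonneg_left ?_ (by positivity)
        exact (div_le_div_iff_of_pos_right hN).mpr hx1
      refine le_trans h4 (le_of_eq ?_)
      field_simp
    rw [hsum]
    calc |(∑ i ∈ Finset.range (k+1), (A i - B i)) + ∑ i ∈ Finset.range (k+1), E i|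
        ≤ |∑ i ∈ Finset.range (k+1), (A i - B i)| + |∑ i ∈ Finset.range (k+1), E i| :=
          abs_add_le _ _
      _ ≤ (2 * L1 + (Mw - c) / m) + (Real.sqrt lam * (Mw - c) / m) / ((k+1:ℕ):ℝ) :=
          add_le_add hABs hEs
      _ = C0 + (Real.sqrt lam * (Mw - c) / m) / ((k+1:ℕ):ℝ) := by
          simp only [hC0_def]
  have hkey2 : |Real.sqrt lam * ∫ t in (0:ℝ)..x, (1 - ω t) * Real.sin (2 * φ t)| ≤ C0 := by
    by_contra hcon
    push_neg at hcon
    have hε : 0 < |Real.sqrt lam * ∫ t in (0:ℝ)..x, (1 - ω t) * Real.sin (2 * φ t)| - C0 :=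
      sub_pos.2 hcon
    have hK0 : 0 ≤ Real.sqrt lam * (Mw - c) / m := by positivity
    obtain ⟨n, hn⟩ := exists_nat_gt ((Real.sqrt lam * (Mw - c) / m) /
      (|Real.sqrt lam * ∫ t in (0:ℝ)..x, (1 - ω t) * Real.sin (2 * φ t)| - C0))
    have h1 := key (n+1) (Nat.succ_pos n)
    have h2 : ((Real.sqrt lam * (Mw - c) / m) /
        (|Real.sqrt lam * ∫ t in (0:ℝ)..x, (1 - ω t) * Real.sin (2 * φ t)| - C0)) < ((n:ℝ)+1) :=
      lt_of_lt_of_le hn (by linarith)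
    have h3 : (Real.sqrt lam * (Mw - c) / m) / ((n:ℝ)+1)
        < |Real.sqrt lam * ∫ t in (0:ℝ)..x, (1 - ω t) * Real.sin (2 * φ t)| - C0 := by
      rw [div_lt_iff₀ (by positivity)]
      rw [div_lt_iff₀ hε] at h2
      nlinarith
    push_cast at h1
    linarith
  have hHx := hH lam x
  rw [← hφ_def] at hHx
  rw [hHx]
  have heq : Real.sqrt lam / 2 * (∫ t in (0:ℝ)..x, (1 - ω t) * Real.sin (2 * φ t))
      = (Real.sqrt lam * ∫ t in (0:ℝ)..x, (1 - ω t) * Real.sin (2 * φ t)) / 2 := by ring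
  rw [heq, abs_div, abs_two]
  refine le_trans ((div_le_div_iff_of_pos_right two_pos).mpr hkey2) ?_
  exact le_add_of_nonneg_right zero_le_one
end
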